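/- arXiv:2307.16746 — 2 statements merged into one kernel-verified Lean document; each statement's English description precedes it below -/
import Mathlib

section
/- Sufficiency direction of NCPTP-local passivity: let $C$ be a Hermitian operator on $\mathcal{H} \otimes \mathcal{H}$ (with $\mathcal{H} = \mathbb{C}^d$) and define $C'$ by $\langle \alpha\beta | C' | \alpha'\beta'\rangle = \delta_{\alpha\alpha'} \sum_i \langle ii | C | \beta'\beta \rangle$. If $C - C' \succeq 0$, then for every unitary $U$ on $\mathcal{H}$, $\sum_{i,j} \mathrm{Tr}\big[ C \, ( U |j\rangle\langle i| U^\dagger \otimes |j\rangle\langle i| ) \big] \ge \sum_{s,i} \langle ss | C | ii \rangle$. -/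
open ComplexOrder Matrix Kronecker

/-- sufficiency direction of NCPTP-local passivity. If
`C - C' ⪰ 0`, where `⟨αβ|C'|α'β'⟩ = δ_{αα'} ∑ᵢ ⟨ii|C|β'β⟩`, then the
Choi-vector energy functional is minimized at `U = I`. -/
theorem ncptp_local_passivity_sufficient {d : ℕ}
    (C : Matrix (Fin d × Fin d) (Fin d × Fin d) ℂ) (hC : C.IsHermitian)
    (C' : Matrix (Fin d × Fin d) (Fin d × Fin d) ℂ)
    (hC' : ∀ α β α' β', C' (α, β) (α', β') =
      if α = α' then ∑ i : Fin d, C (i, i) (β', β) else 0)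
    (hpos : (C - C').PosSemidef) :
    ∀ U : Matrix.unitaryGroup (Fin d) ℂ,
      (∑ i : Fin d, ∑ j : Fin d,
        (C * (((U : Matrix (Fin d) (Fin d) ℂ) * Matrix.single j i 1 *
            star (U : Matrix (Fin d) (Fin d) ℂ)) ⊗ₖ
          Matrix.single j i (1 : ℂ))).trace).re ≥
      (∑ s : Fin d, ∑ i : Fin d, C (s, s) (i, i)).re := by
  intro U
  set Uc : Matrix (Fin d) (Fin d) ℂ := (U : Matrix (Fin d) (Fin d) ℂ) with hUc
  set v : (Fin d × Fin d) → ℂ := fun p => Uc p.1 p.2 with hv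
  -- unitarity in entry form
  have hUU : ∀ β β' : Fin d, (∑ α, star (Uc α β) * Uc α β') = if β = β' then 1 else 0 := by
    intro β β'
    have h1 : star Uc * Uc = 1 := U.2.1
    have := congrFun (congrFun h1 β) β'
    simpa [Matrix.mul_apply, Matrix.star_apply, Matrix.one_apply] using this
  -- trace term
  have htr : ∀ i j : Fin d,
      (C * ((Uc * Matrix.single j i 1 * star Uc) ⊗ₖ
          Matrix.single j i (1 : ℂ))).trace
      = ∑ α : Fin d, ∑ α' : Fin d, C (α, i) (α', j) * (Uc α' j * star (Uc α i)) := by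
    intro i j
    simp [Matrix.trace, Matrix.diag, Matrix.mul_apply, Fintype.sum_prod_type,
      Matrix.kroneckerMap_apply, Matrix.single, ite_and, mul_ite, mul_zero,
      Finset.sum_ite_eq, Finset.sum_ite_eq', mul_comm, mul_left_comm]
  -- C side
  have hCv : star v ⬝ᵥ C.mulVec v
      = ∑ i : Fin d, ∑ j : Fin d, ∑ α : Fin d, ∑ α' : Fin d,
          C (α, i) (α', j) * (Uc α' j * star (Uc α i)) := by
    have key : ∀ i j α α' : Fin d, C (α, i) (α', j) * (Uc α' j * star (Uc α i))
        = star (Uc α i) * (C (α, i) (α', j) * Uc α' j) := by intro _ _ _ _; ring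
    simp only [key]
    have h1 : (∑ i : Fin d, ∑ j : Fin d, ∑ α : Fin d, ∑ α' : Fin d,
          star (Uc α i) * (C (α, i) (α', j) * Uc α' j))
        = ∑ α : Fin d, ∑ i : Fin d, ∑ α' : Fin d, ∑ j : Fin d,
          star (Uc α i) * (C (α, i) (α', j) * Uc α' j) :=
      calc (∑ i : Fin d, ∑ j : Fin d, ∑ α : Fin d, ∑ α' : Fin d,
          star (Uc α i) * (C (α, i) (α', j) * Uc α' j))
          = ∑ i : Fin d, ∑ α : Fin d, ∑ j : Fin d, ∑ α' : Fin d,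
          star (Uc α i) * (C (α, i) (α', j) * Uc α' j) :=
            Finset.sum_congr rfl (fun i _ => Finset.sum_comm)
        _ = ∑ i : Fin d, ∑ α : Fin d, ∑ α' : Fin d, ∑ j : Fin d,
          star (Uc α i) * (C (α, i) (α', j) * Uc α' j) :=
            Finset.sum_congr rfl (fun i _ => Finset.sum_congr rfl (fun α _ => Finset.sum_comm))
        _ = _ := Finset.sum_comm
    rw [h1]
    simp [dotProduct, Matrix.mulVec, Fintype.sum_prod_type, Finset.mul_sum, hv]
  -- C' side
  have hC'v : star v ⬝ᵥ C'.mulVec v = ∑ s : Fin d, ∑ i : Fin d, C (s, s) (i, i) := by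
    have step1 : star v ⬝ᵥ C'.mulVec v
        = ∑ β : Fin d, ∑ β' : Fin d,
            (∑ α : Fin d, star (Uc α β) * Uc α β') * ∑ i : Fin d, C (i, i) (β', β) := by
      have h1 : (∑ β : Fin d, ∑ β' : Fin d,
            (∑ α : Fin d, star (Uc α β) * Uc α β') * ∑ i : Fin d, C (i, i) (β', β))
          = ∑ α : Fin d, ∑ β : Fin d, ∑ β' : Fin d,
            star (Uc α β) * Uc α β' * ∑ i : Fin d, C (i, i) (β', β) := by
        simp only [Finset.sum_mul]
        calc (∑ β : Fin d, ∑ β' : Fin d, ∑ α : Fin d,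
              star (Uc α β) * Uc α β' * ∑ i : Fin d, C (i, i) (β', β))
            = ∑ β : Fin d, ∑ α : Fin d, ∑ β' : Fin d,
              star (Uc α β) * Uc α β' * ∑ i : Fin d, C (i, i) (β', β) :=
              Finset.sum_congr rfl (fun β _ => Finset.sum_comm)
          _ = _ := Finset.sum_comm
      rw [h1]
      simp [dotProduct, Matrix.mulVec, Fintype.sum_prod_type, hC', ite_mul, zero_mul, hv,
        Finset.sum_ite_eq, Finset.mul_sum, mul_comm, mul_left_comm, mul_assoc]
    rw [step1]
    simp only [hUU, ite_mul, one_mul, zero_mul, Finset.sum_ite_eq, Finset.mem_univ, if_true]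
    exact Finset.sum_comm
  -- assemble
  have hquad := hpos.dotProduct_mulVec_nonneg v
  rw [Matrix.sub_mulVec, dotProduct_sub, hCv, hC'v] at hquad
  have hre := (Complex.le_def.mp hquad).1
  simp only [Complex.zero_re, Complex.sub_re] at hre
  have hfinal : (∑ i : Fin d, ∑ j : Fin d,
      (C * ((Uc * Matrix.single j i 1 * star Uc) ⊗ₖ
        Matrix.single j i (1 : ℂ))).trace)
      = ∑ i : Fin d, ∑ j : Fin d, ∑ α : Fin d, ∑ α' : Fin d,
          C (α, i) (α', j) * (Uc α' j * star (Uc α i)) :=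
    Finset.sum_congr rfl (fun i _ => Finset.sum_congr rfl (fun j _ => htr i j))
  rw [ge_iff_le, ← sub_nonneg, ← Complex.sub_re, hfinal]
  simpa using hre
end

section
/- Necessary condition for local energy minimality: let $X, Y$ be Hermitian on $\mathcal{H}_a \otimes \mathcal{H}_b$ and suppose $\mathrm{Tr}\big[(U\otimes I_b) Y (U^\dagger \otimes I_b) X\big] \ge \mathrm{Tr}(YX)$ for all unitaries $U$ on $\mathcal{H}_a$. Then $\mathrm{Tr}_b[Y, X] = 0$. -/
open ComplexOrder Matrix Kronecker

/-- Partial trace over the second tensor factor. -/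
noncomputable def traceRight {a b : Type*} [Fintype b]
    (M : Matrix (a × b) (a × b) ℂ) : Matrix a a ℂ :=
  fun i j => ∑ k : b, M (i, k) (j, k)

section Aux

open NormedSpace

attribute [local instance] Matrix.linftyOpNormedRing Matrix.linftyOpNormedAlgebra

variable {da db : ℕ}

/-- `A ↦ A ⊗ₖ 1` as a ring hom. -/
noncomputable def kronRight (da db : ℕ) :
    Matrix (Fin da) (Fin da) ℂ →+* Matrix (Fin da × Fin db) (Fin da × Fin db) ℂ where
  toFun A := A ⊗ₖ (1 : Matrix (Fin db) (Fin db) ℂ)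
  map_one' := Matrix.one_kronecker_one
  map_mul' A B := by rw [← Matrix.mul_kronecker_mul, one_mul]
  map_zero' := Matrix.zero_kronecker _
  map_add' A B := Matrix.add_kronecker A B 1

lemma kronRight_continuous (da db : ℕ) : Continuous (kronRight da db) := by
  apply continuous_matrix
  intro p q
  have : (fun A : Matrix (Fin da) (Fin da) ℂ => (kronRight da db A) p q)
      = fun A => A p.1 q.1 * (1 : Matrix (Fin db) (Fin db) ℂ) p.2 q.2 := rfl
  rw [this]
  exact (continuous_id.matrix_elem p.1 q.1).mul continuous_const

lemma exp_kronRight (A : Matrix (Fin da) (Fin da) ℂ) :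
    (exp A) ⊗ₖ (1 : Matrix (Fin db) (Fin db) ℂ)
      = exp (A ⊗ₖ (1 : Matrix (Fin db) (Fin db) ℂ)) :=
  map_exp (kronRight da db) (kronRight_continuous da db) A

lemma trace_kron_mul (M : Matrix (Fin da) (Fin da) ℂ)
    (A : Matrix (Fin da × Fin db) (Fin da × Fin db) ℂ) :
    ((M ⊗ₖ (1 : Matrix (Fin db) (Fin db) ℂ)) * A).trace = (M * traceRight A).trace := by
  classical
  simp only [Matrix.trace, Matrix.diag, Matrix.mul_apply, traceRight,
    Matrix.kroneckerMap_apply, Matrix.one_apply, Fintype.sum_prod_type,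
    ite_mul, one_mul, zero_mul, mul_ite, mul_zero, mul_one, Finset.mul_sum]
  refine Finset.sum_congr rfl fun i _ => ?_
  rw [Finset.sum_comm]
  refine Finset.sum_congr rfl fun j _ => ?_
  refine Finset.sum_congr rfl fun k _ => ?_
  simp

end Aux

open NormedSpace in
/-- if `Tr[(U ⊗ I_b) Y (U† ⊗ I_b) X] ≥ Tr(YX)` for all unitaries
`U` on `H_a`, with `X`, `Y` Hermitian, then `Tr_b [Y,X] = 0`. -/
theorem local_energy_min_implies_commutator_traceRight_zero {da db : ℕ}
    (Y X : Matrix (Fin da × Fin db) (Fin da × Fin db) ℂ)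
    (hY : Y.IsHermitian) (hX : X.IsHermitian)
    (h : ∀ U : Matrix.unitaryGroup (Fin da) ℂ,
      ((Y * X).trace).re ≤
        ((((U : Matrix (Fin da) (Fin da) ℂ) ⊗ₖ (1 : Matrix (Fin db) (Fin db) ℂ)) *
          Y *
          ((star (U : Matrix (Fin da) (Fin da) ℂ)) ⊗ₖ
            (1 : Matrix (Fin db) (Fin db) ℂ)) * X).trace).re) :
    traceRight (Y * X - X * Y) = 0 := by
  classical
  letI := Matrix.linftyOpNormedRing (n := Fin da) (α := ℂ)
  letI := Matrix.linftyOpNormedAlgebra (n := Fin da) (R := ℂ) (α := ℂ)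
  letI := Matrix.linftyOpNormedRing (n := Fin da × Fin db) (α := ℂ)
  letI := Matrix.linftyOpNormedAlgebra (n := Fin da × Fin db) (R := ℂ) (α := ℂ)
  -- Key step: for every anti-Hermitian `M` on the first factor,
  -- `re (Tr (M * traceRight (Y*X - X*Y))) = 0`.
  have key : ∀ M : Matrix (Fin da) (Fin da) ℂ, Mᴴ = -M →
      ((M * traceRight (Y * X - X * Y)).trace).re = 0 := by
    intro M hM
    set N : Matrix (Fin da × Fin db) (Fin da × Fin db) ℂ :=
      M ⊗ₖ (1 : Matrix (Fin db) (Fin db) ℂ) with hN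
    have hsmulH : ∀ t : ℝ, (t • M)ᴴ = -(t • M) := by
      intro t
      rw [Matrix.conjTranspose_smul, hM, star_trivial, smul_neg]
    have hstar : ∀ t : ℝ, star (exp (t • M)) = exp (-(t • M)) := by
      intro t
      rw [Matrix.star_eq_conjTranspose, ← Matrix.exp_conjTranspose, hsmulH t]
    have hUmem : ∀ t : ℝ, exp (t • M) ∈ Matrix.unitaryGroup (Fin da) ℂ := by
      intro t
      rw [Matrix.mem_unitaryGroup_iff']
      rw [hstar t, ← Matrix.exp_add_of_commute _ _ ((Commute.refl (t • M)).neg_left)]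
      simp
    set g : ℝ → ℝ := fun t =>
      ((exp (t • N) * Y * exp (t • (-N)) * X).trace).re with hg
    have hkron : ∀ t : ℝ,
        (exp (t • M)) ⊗ₖ (1 : Matrix (Fin db) (Fin db) ℂ) = exp (t • N) := by
      intro t
      rw [exp_kronRight, Matrix.smul_kronecker]
    have hkron' : ∀ t : ℝ,
        (exp (-(t • M))) ⊗ₖ (1 : Matrix (Fin db) (Fin db) ℂ) = exp (t • (-N)) := by
      intro t
      have h1 : -(t • M) = (-t) • M := by rw [neg_smul]
      rw [h1, exp_kronRight, Matrix.smul_kronecker]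
      congr 1
      rw [neg_smul, smul_neg]
    have hmin : ∀ t : ℝ, g 0 ≤ g t := by
      intro t
      have h0 : g 0 = ((Y * X).trace).re := by
        simp [hg, exp_zero]
      rw [h0]
      have := h ⟨exp (t • M), hUmem t⟩
      simpa [hstar t, hkron t, hkron' t, hg] using this
    -- differentiate g at 0
    have hE : HasDerivAt (fun t : ℝ => exp (t • N)) N 0 := by
      have := hasDerivAt_exp_smul_const (𝕂 := ℝ) N 0
      simp only [zero_smul, exp_zero, one_mul] at this
      exact this
    have hG : HasDerivAt (fun t : ℝ => exp (t • (-N))) (-N) 0 := by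
      have := hasDerivAt_exp_smul_const (𝕂 := ℝ) (-N) 0
      simp only [zero_smul, exp_zero, one_mul] at this
      exact this
    have h3 : HasDerivAt
        (fun t : ℝ => exp (t • N) * Y * exp (t • (-N)) * X)
        ((N * Y - Y * N) * X) 0 := by
      have := ((hE.mul_const Y).mul hG).mul_const X
      simp only [zero_smul, exp_zero, one_mul, mul_one, mul_neg] at this
      rw [sub_eq_add_neg]
      exact this
    have h4 : HasDerivAt
        (fun t : ℝ => (exp (t • N) * Y * exp (t • (-N)) * X).trace)
        (((N * Y - Y * N) * X).trace) 0 := by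
      let L : Matrix (Fin da × Fin db) (Fin da × Fin db) ℂ →ₗ[ℝ] ℂ :=
        (Matrix.traceLinearMap (Fin da × Fin db) ℂ ℂ).restrictScalars ℝ
      have := (LinearMap.toContinuousLinearMap L).hasFDerivAt.comp_hasDerivAt 0 h3
      exact this
    have h5 : HasDerivAt g ((((N * Y - Y * N) * X).trace).re) 0 := by
      have := Complex.reCLM.hasFDerivAt.comp_hasDerivAt 0 h4
      exact this
    have hloc : IsLocalMin g 0 := Filter.Eventually.of_forall hmin
    have hd0 : (((N * Y - Y * N) * X).trace).re = 0 := hloc.hasDerivAt_eq_zero h5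
    -- rearrange the trace
    have htr : ((N * Y - Y * N) * X).trace = (M * traceRight (Y * X - X * Y)).trace := by
      rw [← trace_kron_mul, ← hN]
      rw [sub_mul, Matrix.trace_sub, mul_sub, Matrix.trace_sub]
      congr 1
      · rw [mul_assoc]
      · rw [mul_assoc, Matrix.trace_mul_comm, mul_assoc]
    rw [htr] at hd0
    exact hd0
  -- now apply `key` to the commutator's partial trace itself
  set C : Matrix (Fin da) (Fin da) ℂ := traceRight (Y * X - X * Y) with hC
  have hanti : (Y * X - X * Y)ᴴ = -(Y * X - X * Y) := by
    rw [Matrix.conjTranspose_sub, Matrix.conjTranspose_mul, Matrix.conjTranspose_mul,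
      hX.eq, hY.eq, neg_sub]
  have hCentry : ∀ i j, C j i = -(starRingEnd ℂ) (C i j) := by
    intro i j
    have hpt : ∀ p q, (Y * X - X * Y) q p = -(starRingEnd ℂ) ((Y * X - X * Y) p q) := by
      intro p q
      have h1 := congrFun (congrFun hanti q) p
      simp only [Matrix.conjTranspose_apply, Matrix.neg_apply, Complex.star_def] at h1
      linear_combination h1
    show traceRight (Y * X - X * Y) j i = -(starRingEnd ℂ) (traceRight (Y * X - X * Y) i j)
    simp only [traceRight, map_sum, ← Finset.sum_neg_distrib]
    exact Finset.sum_congr rfl fun k _ => hpt (i, k) (j, k)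
  have hCanti : Cᴴ = -C := by
    ext i j
    simp only [Matrix.conjTranspose_apply, Matrix.neg_apply, hCentry i j]
    simp
  have hkey := key C hCanti
  -- compute: re (Tr (C * C)) = -∑ normSq
  have hre : ((C * C).trace).re = -∑ i, ∑ j, Complex.normSq (C i j) := by
    rw [Matrix.trace]
    rw [Complex.re_sum]
    rw [← Finset.sum_neg_distrib]
    refine Finset.sum_congr rfl fun i _ => ?_
    rw [Matrix.diag_apply, Matrix.mul_apply, Complex.re_sum, ← Finset.sum_neg_distrib]
    refine Finset.sum_congr rfl fun j _ => ?_
    rw [hCentry i j]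
    have : C i j * -(starRingEnd ℂ) (C i j) = -(C i j * (starRingEnd ℂ) (C i j)) := by ring
    rw [this, Complex.mul_conj]
    simp
  rw [hre] at hkey
  have hsum : ∑ i, ∑ j, Complex.normSq (C i j) = 0 := by linarith
  have hzero : ∀ i j, C i j = 0 := by
    intro i j
    have h1 := (Finset.sum_eq_zero_iff_of_nonneg (fun i _ =>
      Finset.sum_nonneg fun j _ => Complex.normSq_nonneg (C i j))).1 hsum i (Finset.mem_univ i)
    have h2 := (Finset.sum_eq_zero_iff_of_nonneg (fun j _ =>
      Complex.normSq_nonneg (C i j))).1 h1 j (Finset.mem_univ j)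
    exact Complex.normSq_eq_zero.1 h2
  ext i j
  simp [hzero i j]
end
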